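/- Let g₁, g₂ : ℝ → ℝ be continuous functions with compact support contained in [0,∞), and define f₁(x) := ∫_0^∞ g₁(t)·e^{−x·t} dt and f₂(x) := ∫_0^∞ g₂(t)·e^{−x·t} dt. Then the transformed covariance satisfies τ(f₁,f₂) = ∫_0^∞ ∫_0^∞ g₁(t₁)·g₂(t₂)·(e^{t₁·t₂·σij} − 1)·e^{(t₁²·σii + t₂²·σjj)/2} dt₁ dt₂. -/

import Mathlib

open MeasureTheory Real

/-- Centered bivariate Gaussian density with covariance entries `σii, σjj, σij`. -/
noncomputable def gaussPDF2 (σii σjj σij : ℝ) (x w : ℝ) : ℝ :=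
  (1 / (2 * π * Real.sqrt (σii * σjj - σij ^ 2))) *
    Real.exp (-(σjj * x ^ 2 - 2 * σij * x * w + σii * w ^ 2) / (2 * (σii * σjj - σij ^ 2)))

/-- Centered univariate Gaussian density with variance `σ`. -/
noncomputable def gaussPDF1 (σ x : ℝ) : ℝ :=
  (1 / Real.sqrt (2 * π * σ)) * Real.exp (-x ^ 2 / (2 * σ))

/-- Transformed mean `ν(f)`. -/
noncomputable def transMean (σ : ℝ) (f : ℝ → ℝ) : ℝ := ∫ x : ℝ, f x * gaussPDF1 σ x

/-- Transformed covariance `τ(f, g)`. -/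
noncomputable def transCov (σii σjj σij : ℝ) (f g : ℝ → ℝ) : ℝ :=
  (∫ q : ℝ × ℝ, f q.1 * g q.2 * gaussPDF2 σii σjj σij q.1 q.2) -
    transMean σii f * transMean σjj g


lemma integrable_exp_quad {a : ℝ} (ha : 0 < a) (c : ℝ) :
    Integrable (fun x : ℝ => Real.exp (-a * x ^ 2 + c * x)) := by
  have key : ∀ x : ℝ, -a * x ^ 2 + c * x = -a * (x - c / (2 * a)) ^ 2 + c ^ 2 / (4 * a) := by
    intro x; field_simp; ring
  simp_rw [key, Real.exp_add]
  exact ((integrable_exp_neg_mul_sq ha).comp_sub_right (c / (2 * a))).mul_const _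

lemma integral_exp_quad {a : ℝ} (ha : 0 < a) (c : ℝ) :
    ∫ x : ℝ, Real.exp (-a * x ^ 2 + c * x) = Real.sqrt (π / a) * Real.exp (c ^ 2 / (4 * a)) := by
  have key : ∀ x : ℝ, -a * x ^ 2 + c * x = -a * (x - c / (2 * a)) ^ 2 + c ^ 2 / (4 * a) := by
    intro x; field_simp; ring
  simp_rw [key, Real.exp_add]
  rw [integral_mul_const, integral_sub_right_eq_self (fun x => Real.exp (-a * x ^ 2)),
    integral_gaussian]

lemma integrable_exp_mul_gauss1_shift {σ : ℝ} (hσ : 0 < σ) (b m : ℝ) :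
    Integrable (fun x : ℝ => Real.exp (b * x) * gaussPDF1 σ (x - m)) := by
  have key : ∀ x : ℝ, Real.exp (b * x) * gaussPDF1 σ (x - m) =
      (1 / Real.sqrt (2 * π * σ) * Real.exp (-(m ^ 2) / (2 * σ))) *
        Real.exp (-(1 / (2 * σ)) * x ^ 2 + (b + m / σ) * x) := by
    intro x
    unfold gaussPDF1
    have hexp : -(m ^ 2) / (2 * σ) + (-(1 / (2 * σ)) * x ^ 2 + (b + m / σ) * x)
        = b * x + -(x - m) ^ 2 / (2 * σ) := by field_simp; ring
    have h2 : Real.exp (-(m ^ 2) / (2 * σ)) * Real.exp (-(1 / (2 * σ)) * x ^ 2 + (b + m / σ) * x)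
        = Real.exp (b * x) * Real.exp (-(x - m) ^ 2 / (2 * σ)) := by
      rw [← Real.exp_add, ← Real.exp_add, hexp]
    rw [mul_assoc (1 / Real.sqrt (2 * π * σ)), h2]
    ring
  simp_rw [key]
  exact (integrable_exp_quad (by positivity) _).const_mul _

lemma integral_exp_mul_gauss1_shift {σ : ℝ} (hσ : 0 < σ) (b m : ℝ) :
    ∫ x : ℝ, Real.exp (b * x) * gaussPDF1 σ (x - m) = Real.exp (b * m + b ^ 2 * σ / 2) := by
  have key : ∀ x : ℝ, Real.exp (b * x) * gaussPDF1 σ (x - m) =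
      (1 / Real.sqrt (2 * π * σ) * Real.exp (-(m ^ 2) / (2 * σ))) *
        Real.exp (-(1 / (2 * σ)) * x ^ 2 + (b + m / σ) * x) := by
    intro x
    unfold gaussPDF1
    have hexp : -(m ^ 2) / (2 * σ) + (-(1 / (2 * σ)) * x ^ 2 + (b + m / σ) * x)
        = b * x + -(x - m) ^ 2 / (2 * σ) := by field_simp; ring
    have h2 : Real.exp (-(m ^ 2) / (2 * σ)) * Real.exp (-(1 / (2 * σ)) * x ^ 2 + (b + m / σ) * x)
        = Real.exp (b * x) * Real.exp (-(x - m) ^ 2 / (2 * σ)) := by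
      rw [← Real.exp_add, ← Real.exp_add, hexp]
    rw [mul_assoc (1 / Real.sqrt (2 * π * σ)), h2]
    ring
  simp_rw [key]
  rw [integral_const_mul, integral_exp_quad (by positivity)]
  have h1 : Real.sqrt (π / (1 / (2 * σ))) = Real.sqrt (2 * π * σ) := by
    congr 1; field_simp
  rw [h1]
  have h2 : Real.sqrt (2 * π * σ) ≠ 0 := by positivity
  rw [mul_mul_mul_comm, one_div, inv_mul_cancel₀ h2, one_mul, ← Real.exp_add]
  congr 1
  field_simp; ring

lemma integrable_exp_mul_gauss1 {σ : ℝ} (hσ : 0 < σ) (b : ℝ) :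
    Integrable (fun x : ℝ => Real.exp (b * x) * gaussPDF1 σ x) := by
  simpa using integrable_exp_mul_gauss1_shift hσ b 0

lemma integral_exp_mul_gauss1 {σ : ℝ} (hσ : 0 < σ) (b : ℝ) :
    ∫ x : ℝ, Real.exp (b * x) * gaussPDF1 σ x = Real.exp (b ^ 2 * σ / 2) := by
  have := integral_exp_mul_gauss1_shift hσ b 0
  simpa using this

lemma gaussPDF2_decomp {σii σjj σij : ℝ} (hjj : 0 < σjj)
    (hd : 0 < σii * σjj - σij ^ 2) (x w : ℝ) :
    gaussPDF2 σii σjj σij x w =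
      gaussPDF1 σjj w * gaussPDF1 ((σii * σjj - σij ^ 2) / σjj) (x - σij * w / σjj) := by
  set d := σii * σjj - σij ^ 2 with hd_def
  unfold gaussPDF2 gaussPDF1
  rw [mul_mul_mul_comm, ← Real.exp_add]
  congr 1
  · rw [div_mul_div_comm, one_mul, ← Real.sqrt_mul (by positivity)]
    rw [show 2 * π * σjj * (2 * π * (d / σjj)) = (2 * π) ^ 2 * d by field_simp,
      Real.sqrt_mul (by positivity), Real.sqrt_sq (by positivity)]
  · congr 1
    have hd' : σii * σjj - σij ^ 2 ≠ 0 := hd.ne'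
    have hd'' : σjj * σii - σij ^ 2 ≠ 0 := by rw [mul_comm]; exact hd'
    simp only [hd_def]
    field_simp
    ring

section Biv
variable {σii σjj σij : ℝ} (hii : 0 < σii) (hjj : 0 < σjj)
  (hd : 0 < σii * σjj - σij ^ 2)

lemma gaussPDF2_nonneg (x w : ℝ) : 0 ≤ gaussPDF2 σii σjj σij x w := by
  unfold gaussPDF2; positivity

lemma continuous_gaussPDF2 : Continuous (fun q : ℝ × ℝ => gaussPDF2 σii σjj σij q.1 q.2) := by
  unfold gaussPDF2; fun_prop

include hii hjj hd in
lemma gaussPDF2_le (x w : ℝ) :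
    gaussPDF2 σii σjj σij x w ≤ (1 / (2 * π * Real.sqrt (σii * σjj - σij ^ 2))) *
      (Real.exp (-(1 / (4 * σii)) * x ^ 2) * Real.exp (-(1 / (4 * σjj)) * w ^ 2)) := by
  unfold gaussPDF2
  rw [← Real.exp_add]
  refine mul_le_mul_of_nonneg_left (Real.exp_le_exp.mpr ?_) (by positivity)
  have h1 : 0 ≤ σii * (σjj * x - σij * w) ^ 2 := by positivity
  have h2 : 0 ≤ σjj * (σii * w - σij * x) ^ 2 := by positivity
  have key : 2 * (σii * σjj - σij ^ 2) * (σjj * x ^ 2 + σii * w ^ 2) ≤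
      4 * σii * σjj * (σjj * x ^ 2 - 2 * σij * x * w + σii * w ^ 2) := by nlinarith [h1, h2]
  have e : -(1 / (4 * σii)) * x ^ 2 + -(1 / (4 * σjj)) * w ^ 2 =
      -(2 * (σii * σjj - σij ^ 2) * (σjj * x ^ 2 + σii * w ^ 2)) /
        (4 * σii * σjj * (2 * (σii * σjj - σij ^ 2))) := by field_simp; ring
  rw [e, div_le_div_iff₀ (by positivity) (by positivity)]
  nlinarith [key, mul_pos (mul_pos hii hjj) hd]

include hii hjj hd in
lemma integrable_exp_gauss2 (a b : ℝ) :
    Integrable (fun q : ℝ × ℝ =>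
      Real.exp (a * q.1 + b * q.2) * gaussPDF2 σii σjj σij q.1 q.2) := by
  have hbd := Integrable.mul_prod
    (integrable_exp_quad (a := 1 / (4 * σii)) (by positivity) a)
    (integrable_exp_quad (a := 1 / (4 * σjj)) (by positivity) b)
  refine (hbd.const_mul (1 / (2 * π * Real.sqrt (σii * σjj - σij ^ 2)))).mono'
    (Continuous.aestronglyMeasurable (by unfold gaussPDF2; fun_prop))
    (Filter.Eventually.of_forall fun q => ?_)
  have h1 := gaussPDF2_le hii hjj hd q.1 q.2
  have h2 : 0 ≤ gaussPDF2 σii σjj σij q.1 q.2 := gaussPDF2_nonneg _ _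
  rw [Real.norm_eq_abs, abs_of_nonneg (by positivity)]
  calc Real.exp (a * q.1 + b * q.2) * gaussPDF2 σii σjj σij q.1 q.2
      ≤ Real.exp (a * q.1 + b * q.2) * ((1 / (2 * π * Real.sqrt (σii * σjj - σij ^ 2))) *
        (Real.exp (-(1 / (4 * σii)) * q.1 ^ 2) * Real.exp (-(1 / (4 * σjj)) * q.2 ^ 2))) :=
        mul_le_mul_of_nonneg_left h1 (Real.exp_pos _).le
    _ = 1 / (2 * π * Real.sqrt (σii * σjj - σij ^ 2)) *
        (Real.exp (-(1 / (4 * σii)) * q.1 ^ 2 + a * q.1) *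
          Real.exp (-(1 / (4 * σjj)) * q.2 ^ 2 + b * q.2)) := by
        rw [Real.exp_add, Real.exp_add, Real.exp_add]; ring

end Biv
section Biv2
variable {σii σjj σij : ℝ} (hii : 0 < σii) (hjj : 0 < σjj)
  (hd : 0 < σii * σjj - σij ^ 2)

include hii hjj hd in
lemma integral_exp_gauss2 (a b : ℝ) :
    ∫ q : ℝ × ℝ, Real.exp (a * q.1 + b * q.2) * gaussPDF2 σii σjj σij q.1 q.2 =
      Real.exp ((a ^ 2 * σii + 2 * σij * a * b + b ^ 2 * σjj) / 2) := by
  have hj : σjj ≠ 0 := ne_of_gt hjj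
  set v : ℝ := (σii * σjj - σij ^ 2) / σjj with hv
  have hv0 : 0 < v := by positivity
  have hint := (integrable_exp_gauss2 hii hjj hd a b).swap
  simp only [Function.comp_def, Prod.fst_swap, Prod.snd_swap] at hint
  rw [MeasureTheory.Measure.volume_eq_prod, ← MeasureTheory.integral_prod_swap]
  simp only [Prod.fst_swap, Prod.snd_swap]
  rw [MeasureTheory.integral_prod _ hint]
  have step1 : ∀ w : ℝ, (∫ x : ℝ, Real.exp (a * x + b * w) * gaussPDF2 σii σjj σij x w) =
      (Real.exp (b * w) * gaussPDF1 σjj w) * Real.exp (a * (σij * w / σjj) + a ^ 2 * v / 2) := by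
    intro w
    have hpt : ∀ x : ℝ, Real.exp (a * x + b * w) * gaussPDF2 σii σjj σij x w =
        (Real.exp (b * w) * gaussPDF1 σjj w) *
          (Real.exp (a * x) * gaussPDF1 v (x - σij * w / σjj)) := by
      intro x
      rw [gaussPDF2_decomp hjj hd, Real.exp_add]
      ring
    simp_rw [hpt]
    rw [MeasureTheory.integral_const_mul, integral_exp_mul_gauss1_shift hv0]
  calc (∫ w : ℝ, ∫ x : ℝ, Real.exp (a * x + b * w) * gaussPDF2 σii σjj σij x w)
      = ∫ w : ℝ, Real.exp (a ^ 2 * v / 2) *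
          (Real.exp ((b + a * σij / σjj) * w) * gaussPDF1 σjj w) := by
        refine MeasureTheory.integral_congr_ae (Filter.Eventually.of_forall fun w => ?_)
        beta_reduce
        rw [step1 w]
        have h : Real.exp (b * w) * Real.exp (a * (σij * w / σjj) + a ^ 2 * v / 2) =
            Real.exp (a ^ 2 * v / 2) * Real.exp ((b + a * σij / σjj) * w) := by
          rw [← Real.exp_add, ← Real.exp_add]
          congr 1
          field_simp
          ring
        calc Real.exp (b * w) * gaussPDF1 σjj w *
              Real.exp (a * (σij * w / σjj) + a ^ 2 * v / 2)
            = (Real.exp (b * w) * Real.exp (a * (σij * w / σjj) + a ^ 2 * v / 2)) *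
              gaussPDF1 σjj w := by ring
          _ = Real.exp (a ^ 2 * v / 2) *
              (Real.exp ((b + a * σij / σjj) * w) * gaussPDF1 σjj w) := by rw [h]; ring
    _ = Real.exp (a ^ 2 * v / 2) * Real.exp ((b + a * σij / σjj) ^ 2 * σjj / 2) := by
        rw [MeasureTheory.integral_const_mul, integral_exp_mul_gauss1 hjj]
    _ = Real.exp ((a ^ 2 * σii + 2 * σij * a * b + b ^ 2 * σjj) / 2) := by
        rw [← Real.exp_add]
        congr 1
        rw [hv]
        field_simp
        ring

end Biv2
lemma gaussPDF1_nonneg (σ x : ℝ) : 0 ≤ gaussPDF1 σ x := by unfold gaussPDF1; positivity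

lemma exists_bound_supp {g : ℝ → ℝ} (hc : Continuous g) (hs : HasCompactSupport g)
    (hsupp : tsupport g ⊆ Set.Ici 0) :
    ∃ C R : ℝ, 0 ≤ C ∧ (∀ t, |g t| ≤ C) ∧ tsupport g ⊆ Set.Icc 0 R := by
  obtain ⟨C, hC⟩ := hs.exists_bound_of_continuous hc
  obtain ⟨r, hr⟩ := hs.isBounded.subset_closedBall 0
  refine ⟨C, r, le_trans (abs_nonneg _) (hC 0), fun t => hC t, fun t ht => ?_⟩
  have h1 := hsupp ht
  have h2 := hr ht
  rw [Metric.mem_closedBall, Real.dist_eq, sub_zero] at h2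
  exact ⟨h1, le_trans (le_abs_self t) h2⟩

lemma kernel_bound {g : ℝ → ℝ} {C R : ℝ} (hC0 : 0 ≤ C) (hC : ∀ t, |g t| ≤ C)
    (hR : tsupport g ⊆ Set.Icc 0 R) (x t : ℝ) :
    |g t| * Real.exp (-(x * t)) ≤
      (C * (Set.Icc 0 R).indicator (1 : ℝ → ℝ) t) * (Real.exp (R * x) + Real.exp (-R * x)) := by
  by_cases ht : t ∈ tsupport g
  · obtain ⟨ht0, htR⟩ := hR ht
    have hRt : (Set.Icc 0 R).indicator (1 : ℝ → ℝ) t = 1 :=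
      Set.indicator_of_mem (hR ht) 1
    rw [hRt, mul_one]
    have hexp : Real.exp (-(x * t)) ≤ Real.exp (R * x) + Real.exp (-R * x) := by
      rcases le_total 0 x with hx | hx
      · have h1 : -(x * t) ≤ R * x := by nlinarith
        calc Real.exp (-(x * t)) ≤ Real.exp (R * x) := Real.exp_le_exp.mpr h1
          _ ≤ _ := le_add_of_nonneg_right (Real.exp_pos _).le
      · have h1 : -(x * t) ≤ -R * x := by nlinarith
        calc Real.exp (-(x * t)) ≤ Real.exp (-R * x) := Real.exp_le_exp.mpr h1
          _ ≤ _ := le_add_of_nonneg_left (Real.exp_pos _).le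
    exact mul_le_mul (hC t) hexp (Real.exp_pos _).le hC0
  · rw [image_eq_zero_of_notMem_tsupport ht, abs_zero, zero_mul]
    have h1 : (0:ℝ) ≤ (Set.Icc 0 R).indicator (1 : ℝ → ℝ) t :=
      Set.indicator_nonneg (fun _ _ => zero_le_one) t
    positivity

lemma integrable_indicator_Icc (R : ℝ) :
    Integrable (fun t => (Set.Icc 0 R).indicator (1 : ℝ → ℝ) t)
      (volume.restrict (Set.Ioi (0:ℝ))) := by
  rw [MeasureTheory.integrable_indicator_iff measurableSet_Icc]
  exact (MeasureTheory.integrableOn_const_iff).mpr (Or.inr (lt_of_le_of_lt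
    (MeasureTheory.Measure.restrict_le_self _) measure_Icc_lt_top))
lemma integrable_kernel_1d {g : ℝ → ℝ} (hc : Continuous g) (hs : HasCompactSupport g)
    (hsupp : tsupport g ⊆ Set.Ici 0) {σ : ℝ} (hσ : 0 < σ) :
    Integrable (Function.uncurry fun (x t : ℝ) => g t * Real.exp (-(x * t)) * gaussPDF1 σ x)
      (volume.prod (volume.restrict (Set.Ioi 0))) := by
  obtain ⟨C, R, hC0, hC, hR⟩ := exists_bound_supp hc hs hsupp
  have hB1 : Integrable (fun x : ℝ =>
      (Real.exp (R * x) + Real.exp (-R * x)) * gaussPDF1 σ x) := by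
    simp_rw [add_mul]
    exact (integrable_exp_mul_gauss1 hσ R).add (integrable_exp_mul_gauss1 hσ (-R))
  have hB2 : Integrable (fun t : ℝ => C * (Set.Icc 0 R).indicator (1 : ℝ → ℝ) t)
      (volume.restrict (Set.Ioi 0)) := (integrable_indicator_Icc R).const_mul C
  refine (hB1.mul_prod hB2).mono'
    (Continuous.aestronglyMeasurable (by unfold gaussPDF1; fun_prop))
    (Filter.Eventually.of_forall fun z => ?_)
  obtain ⟨x, t⟩ := z
  simp only [Function.uncurry]
  rw [Real.norm_eq_abs, abs_mul, abs_mul, abs_of_nonneg (Real.exp_pos _).le,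
    abs_of_nonneg (gaussPDF1_nonneg σ x)]
  have hb := kernel_bound hC0 hC hR x t
  calc |g t| * Real.exp (-(x * t)) * gaussPDF1 σ x
      ≤ (C * (Set.Icc 0 R).indicator (1 : ℝ → ℝ) t) *
          (Real.exp (R * x) + Real.exp (-R * x)) * gaussPDF1 σ x :=
        mul_le_mul_of_nonneg_right hb (gaussPDF1_nonneg σ x)
    _ = (Real.exp (R * x) + Real.exp (-R * x)) * gaussPDF1 σ x *
        (C * (Set.Icc 0 R).indicator (1 : ℝ → ℝ) t) := by ring

lemma mean_eq {g : ℝ → ℝ} (hc : Continuous g) (hs : HasCompactSupport g)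
    (hsupp : tsupport g ⊆ Set.Ici 0) {σ : ℝ} (hσ : 0 < σ) :
    ∫ x : ℝ, (∫ t in Set.Ioi (0:ℝ), g t * Real.exp (-(x * t))) * gaussPDF1 σ x =
      ∫ t in Set.Ioi (0:ℝ), g t * Real.exp (t ^ 2 * σ / 2) := by
  have h1 : ∀ x : ℝ, (∫ t in Set.Ioi (0:ℝ), g t * Real.exp (-(x * t))) * gaussPDF1 σ x =
      ∫ t in Set.Ioi (0:ℝ), g t * Real.exp (-(x * t)) * gaussPDF1 σ x := by
    intro x
    rw [← MeasureTheory.integral_mul_const]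
  simp_rw [h1]
  rw [MeasureTheory.integral_integral_swap (integrable_kernel_1d hc hs hsupp hσ)]
  refine MeasureTheory.integral_congr_ae (Filter.Eventually.of_forall fun t => ?_)
  beta_reduce
  have h2 : ∀ x : ℝ, g t * Real.exp (-(x * t)) * gaussPDF1 σ x =
      g t * (Real.exp ((-t) * x) * gaussPDF1 σ x) := by
    intro x; rw [show (-t) * x = -(x * t) by ring]; ring
  simp_rw [h2]
  rw [MeasureTheory.integral_const_mul, integral_exp_mul_gauss1 hσ]
  congr 2
  ring
section Main
variable {σii σjj σij : ℝ} (hii : 0 < σii) (hjj : 0 < σjj)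
  (hd : 0 < σii * σjj - σij ^ 2)
  {g₁ g₂ : ℝ → ℝ} (hc₁ : Continuous g₁) (hc₂ : Continuous g₂)
  (hs₁ : HasCompactSupport g₁) (hs₂ : HasCompactSupport g₂)
  (hsupp₁ : tsupport g₁ ⊆ Set.Ici 0) (hsupp₂ : tsupport g₂ ⊆ Set.Ici 0)

include hii hjj hd hc₁ hc₂ hs₁ hs₂ hsupp₁ hsupp₂ in
lemma integrable_kernel_2d :
    Integrable (Function.uncurry fun (q t : ℝ × ℝ) =>
      g₁ t.1 * Real.exp (-(q.1 * t.1)) * (g₂ t.2 * Real.exp (-(q.2 * t.2))) *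
        gaussPDF2 σii σjj σij q.1 q.2)
      ((volume : Measure (ℝ × ℝ)).prod
        ((volume.restrict (Set.Ioi 0)).prod (volume.restrict (Set.Ioi 0)))) := by
  obtain ⟨C₁, R₁, hC₁0, hC₁b, hR₁⟩ := exists_bound_supp hc₁ hs₁ hsupp₁
  obtain ⟨C₂, R₂, hC₂0, hC₂b, hR₂⟩ := exists_bound_supp hc₂ hs₂ hsupp₂
  have hB1 : Integrable (fun q : ℝ × ℝ =>
      (Real.exp (R₁ * q.1) + Real.exp (-R₁ * q.1)) *
        (Real.exp (R₂ * q.2) + Real.exp (-R₂ * q.2)) * gaussPDF2 σii σjj σij q.1 q.2) := by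
    have hkey : ∀ q : ℝ × ℝ,
        (Real.exp (R₁ * q.1) + Real.exp (-R₁ * q.1)) *
          (Real.exp (R₂ * q.2) + Real.exp (-R₂ * q.2)) * gaussPDF2 σii σjj σij q.1 q.2 =
        Real.exp (R₁ * q.1 + R₂ * q.2) * gaussPDF2 σii σjj σij q.1 q.2 +
        Real.exp (R₁ * q.1 + -R₂ * q.2) * gaussPDF2 σii σjj σij q.1 q.2 +
        (Real.exp (-R₁ * q.1 + R₂ * q.2) * gaussPDF2 σii σjj σij q.1 q.2 +
         Real.exp (-R₁ * q.1 + -R₂ * q.2) * gaussPDF2 σii σjj σij q.1 q.2) := by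
      intro q
      simp only [Real.exp_add]
      ring
    simp_rw [hkey]
    exact ((integrable_exp_gauss2 hii hjj hd R₁ R₂).add
        (integrable_exp_gauss2 hii hjj hd R₁ (-R₂))).add
      ((integrable_exp_gauss2 hii hjj hd (-R₁) R₂).add
        (integrable_exp_gauss2 hii hjj hd (-R₁) (-R₂)))
  have hB2 : Integrable (fun t : ℝ × ℝ =>
      (C₁ * (Set.Icc 0 R₁).indicator (1 : ℝ → ℝ) t.1) *
        (C₂ * (Set.Icc 0 R₂).indicator (1 : ℝ → ℝ) t.2))
      ((volume.restrict (Set.Ioi 0)).prod (volume.restrict (Set.Ioi 0))) :=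
    ((integrable_indicator_Icc R₁).const_mul C₁).mul_prod
      ((integrable_indicator_Icc R₂).const_mul C₂)
  refine (hB1.mul_prod hB2).mono'
    (Continuous.aestronglyMeasurable (by unfold gaussPDF2; fun_prop))
    (Filter.Eventually.of_forall fun z => ?_)
  obtain ⟨q, t⟩ := z
  simp only [Function.uncurry]
  have hb₁ := kernel_bound hC₁0 hC₁b hR₁ q.1 t.1
  have hb₂ := kernel_bound hC₂0 hC₂b hR₂ q.2 t.2
  have hnn₁ : (0:ℝ) ≤ C₁ * (Set.Icc 0 R₁).indicator (1 : ℝ → ℝ) t.1 :=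
    mul_nonneg hC₁0 (Set.indicator_nonneg (fun _ _ => zero_le_one) _)
  have hnn₂ : (0:ℝ) ≤ C₂ * (Set.Icc 0 R₂).indicator (1 : ℝ → ℝ) t.2 :=
    mul_nonneg hC₂0 (Set.indicator_nonneg (fun _ _ => zero_le_one) _)
  rw [Real.norm_eq_abs, abs_mul, abs_mul, abs_mul, abs_mul,
    abs_of_nonneg (Real.exp_pos _).le, abs_of_nonneg (Real.exp_pos _).le,
    abs_of_nonneg (gaussPDF2_nonneg q.1 q.2)]
  calc |g₁ t.1| * Real.exp (-(q.1 * t.1)) * (|g₂ t.2| * Real.exp (-(q.2 * t.2))) *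
        gaussPDF2 σii σjj σij q.1 q.2
      ≤ ((C₁ * (Set.Icc 0 R₁).indicator (1 : ℝ → ℝ) t.1) *
          (Real.exp (R₁ * q.1) + Real.exp (-R₁ * q.1))) *
        ((C₂ * (Set.Icc 0 R₂).indicator (1 : ℝ → ℝ) t.2) *
          (Real.exp (R₂ * q.2) + Real.exp (-R₂ * q.2))) *
        gaussPDF2 σii σjj σij q.1 q.2 := by
        refine mul_le_mul_of_nonneg_right ?_ (gaussPDF2_nonneg q.1 q.2)
        exact mul_le_mul hb₁ hb₂
          (mul_nonneg (abs_nonneg _) (Real.exp_pos _).le)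
          (mul_nonneg hnn₁ (by positivity))
    _ = (Real.exp (R₁ * q.1) + Real.exp (-R₁ * q.1)) *
          (Real.exp (R₂ * q.2) + Real.exp (-R₂ * q.2)) * gaussPDF2 σii σjj σij q.1 q.2 *
        ((C₁ * (Set.Icc 0 R₁).indicator (1 : ℝ → ℝ) t.1) *
          (C₂ * (Set.Icc 0 R₂).indicator (1 : ℝ → ℝ) t.2)) := by ring

end Main

section Final
variable {σii σjj σij : ℝ}
  {g₁ g₂ : ℝ → ℝ} (hc₁ : Continuous g₁) (hc₂ : Continuous g₂)
  (hs₁ : HasCompactSupport g₁) (hs₂ : HasCompactSupport g₂)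

include hc₁ hc₂ hs₁ hs₂ in
lemma integrable_gg {h : ℝ × ℝ → ℝ} (hh : Continuous h) :
    Integrable (fun t : ℝ × ℝ => g₁ t.1 * g₂ t.2 * h t)
      ((volume.restrict (Set.Ioi 0)).prod (volume.restrict (Set.Ioi 0))) := by
  have hcont : Continuous fun t : ℝ × ℝ => g₁ t.1 * g₂ t.2 * h t := by fun_prop
  have hcs : HasCompactSupport fun t : ℝ × ℝ => g₁ t.1 * g₂ t.2 * h t := by
    refine HasCompactSupport.intro (hs₁.prod hs₂) fun t ht => ?_
    rw [Set.mem_prod] at ht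
    push_neg at ht
    by_cases h1 : t.1 ∈ tsupport g₁
    · rw [image_eq_zero_of_notMem_tsupport (ht h1), mul_zero, zero_mul]
    · rw [image_eq_zero_of_notMem_tsupport h1, zero_mul, zero_mul]
  have hint : Integrable (fun t : ℝ × ℝ => g₁ t.1 * g₂ t.2 * h t) (volume : Measure (ℝ × ℝ)) :=
    hcont.integrable_of_hasCompactSupport hcs
  rw [MeasureTheory.Measure.volume_eq_prod] at hint
  have := hint.restrict (s := Set.Ioi 0 ×ˢ Set.Ioi 0)
  rwa [← MeasureTheory.Measure.prod_restrict] at this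

end Final

theorem transformed_covariance_laplace
    (σii σjj σij : ℝ) (hii : 0 < σii) (hjj : 0 < σjj)
    (hd : 0 < σii * σjj - σij ^ 2)
    (g₁ g₂ : ℝ → ℝ) (hc₁ : Continuous g₁) (hc₂ : Continuous g₂)
    (hs₁ : HasCompactSupport g₁) (hs₂ : HasCompactSupport g₂)
    (hsupp₁ : tsupport g₁ ⊆ Set.Ici 0) (hsupp₂ : tsupport g₂ ⊆ Set.Ici 0)
    (f₁ f₂ : ℝ → ℝ)
    (hf₁ : ∀ x : ℝ, f₁ x = ∫ t in Set.Ioi (0 : ℝ), g₁ t * Real.exp (-(x * t)))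
    (hf₂ : ∀ x : ℝ, f₂ x = ∫ t in Set.Ioi (0 : ℝ), g₂ t * Real.exp (-(x * t))) :
    transCov σii σjj σij f₁ f₂ =
      ∫ t₁ in Set.Ioi (0 : ℝ), ∫ t₂ in Set.Ioi (0 : ℝ),
        g₁ t₁ * g₂ t₂ * (Real.exp (t₁ * t₂ * σij) - 1) *
          Real.exp ((t₁ ^ 2 * σii + t₂ ^ 2 * σjj) / 2) := by
  unfold transCov transMean
  have hm₁ : (∫ x : ℝ, f₁ x * gaussPDF1 σii x) =
      ∫ t in Set.Ioi (0:ℝ), g₁ t * Real.exp (t ^ 2 * σii / 2) := by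
    simp_rw [hf₁]
    exact mean_eq hc₁ hs₁ hsupp₁ hii
  have hm₂ : (∫ x : ℝ, f₂ x * gaussPDF1 σjj x) =
      ∫ t in Set.Ioi (0:ℝ), g₂ t * Real.exp (t ^ 2 * σjj / 2) := by
    simp_rw [hf₂]
    exact mean_eq hc₂ hs₂ hsupp₂ hjj
  have hI : (∫ q : ℝ × ℝ, f₁ q.1 * f₂ q.2 * gaussPDF2 σii σjj σij q.1 q.2) =
      ∫ t : ℝ × ℝ, g₁ t.1 * g₂ t.2 *
          Real.exp ((t.1 ^ 2 * σii + 2 * σij * t.1 * t.2 + t.2 ^ 2 * σjj) / 2)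
        ∂((volume.restrict (Set.Ioi 0)).prod (volume.restrict (Set.Ioi 0))) := by
    have hpt : ∀ q : ℝ × ℝ, f₁ q.1 * f₂ q.2 * gaussPDF2 σii σjj σij q.1 q.2 =
        ∫ t : ℝ × ℝ, g₁ t.1 * Real.exp (-(q.1 * t.1)) * (g₂ t.2 * Real.exp (-(q.2 * t.2))) *
            gaussPDF2 σii σjj σij q.1 q.2
          ∂((volume.restrict (Set.Ioi 0)).prod (volume.restrict (Set.Ioi 0))) := by
      intro q
      rw [hf₁, hf₂, ← MeasureTheory.integral_prod_mul, ← MeasureTheory.integral_mul_const]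
    simp_rw [hpt]
    rw [MeasureTheory.integral_integral_swap
      (integrable_kernel_2d hii hjj hd hc₁ hc₂ hs₁ hs₂ hsupp₁ hsupp₂)]
    refine MeasureTheory.integral_congr_ae (Filter.Eventually.of_forall fun t => ?_)
    beta_reduce
    have h2 : ∀ q : ℝ × ℝ, g₁ t.1 * Real.exp (-(q.1 * t.1)) *
        (g₂ t.2 * Real.exp (-(q.2 * t.2))) * gaussPDF2 σii σjj σij q.1 q.2 =
        (g₁ t.1 * g₂ t.2) *
          (Real.exp ((-t.1) * q.1 + (-t.2) * q.2) * gaussPDF2 σii σjj σij q.1 q.2) := by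
      intro q
      rw [show (-t.1) * q.1 + (-t.2) * q.2 = -(q.1 * t.1) + -(q.2 * t.2) by ring, Real.exp_add]
      ring
    simp_rw [h2]
    rw [MeasureTheory.integral_const_mul, integral_exp_gauss2 hii hjj hd]
    have h3 : ((-t.1) ^ 2 * σii + 2 * σij * (-t.1) * (-t.2) + (-t.2) ^ 2 * σjj) / 2 =
        (t.1 ^ 2 * σii + 2 * σij * t.1 * t.2 + t.2 ^ 2 * σjj) / 2 := by ring
    rw [h3, mul_assoc]
  rw [hI, hm₁, hm₂, ← MeasureTheory.integral_prod_mul]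
  have hintA := integrable_gg hc₁ hc₂ hs₁ hs₂
    (h := fun t : ℝ × ℝ =>
      Real.exp ((t.1 ^ 2 * σii + 2 * σij * t.1 * t.2 + t.2 ^ 2 * σjj) / 2)) (by fun_prop)
  have hintB : Integrable (fun t : ℝ × ℝ =>
      g₁ t.1 * Real.exp (t.1 ^ 2 * σii / 2) * (g₂ t.2 * Real.exp (t.2 ^ 2 * σjj / 2)))
      ((volume.restrict (Set.Ioi 0)).prod (volume.restrict (Set.Ioi 0))) := by
    refine (integrable_gg hc₁ hc₂ hs₁ hs₂
      (h := fun t : ℝ × ℝ => Real.exp (t.1 ^ 2 * σii / 2) * Real.exp (t.2 ^ 2 * σjj / 2))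
      (by fun_prop)).congr (Filter.Eventually.of_forall fun t => by ring)
  have hintC : Integrable (fun t : ℝ × ℝ =>
      g₁ t.1 * g₂ t.2 * (Real.exp (t.1 * t.2 * σij) - 1) *
        Real.exp ((t.1 ^ 2 * σii + t.2 ^ 2 * σjj) / 2))
      ((volume.restrict (Set.Ioi 0)).prod (volume.restrict (Set.Ioi 0))) := by
    refine (integrable_gg hc₁ hc₂ hs₁ hs₂
      (h := fun t : ℝ × ℝ => (Real.exp (t.1 * t.2 * σij) - 1) *
        Real.exp ((t.1 ^ 2 * σii + t.2 ^ 2 * σjj) / 2))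
      (by fun_prop)).congr (Filter.Eventually.of_forall fun t => by ring)
  rw [← MeasureTheory.integral_sub hintA hintB]
  have hfun : ∀ t : ℝ × ℝ,
      g₁ t.1 * g₂ t.2 *
          Real.exp ((t.1 ^ 2 * σii + 2 * σij * t.1 * t.2 + t.2 ^ 2 * σjj) / 2) -
        g₁ t.1 * Real.exp (t.1 ^ 2 * σii / 2) * (g₂ t.2 * Real.exp (t.2 ^ 2 * σjj / 2)) =
      g₁ t.1 * g₂ t.2 * (Real.exp (t.1 * t.2 * σij) - 1) *
        Real.exp ((t.1 ^ 2 * σii + t.2 ^ 2 * σjj) / 2) := by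
    intro t
    have hA : Real.exp ((t.1 ^ 2 * σii + 2 * σij * t.1 * t.2 + t.2 ^ 2 * σjj) / 2) =
        Real.exp (t.1 * t.2 * σij) * Real.exp ((t.1 ^ 2 * σii + t.2 ^ 2 * σjj) / 2) := by
      rw [← Real.exp_add]; congr 1; ring
    have hB : Real.exp (t.1 ^ 2 * σii / 2) * Real.exp (t.2 ^ 2 * σjj / 2) =
        Real.exp ((t.1 ^ 2 * σii + t.2 ^ 2 * σjj) / 2) := by
      rw [← Real.exp_add]; congr 1; ring
    rw [hA]
    linear_combination -(g₁ t.1 * g₂ t.2) * hB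
  simp_rw [hfun]
  rw [MeasureTheory.integral_prod _ hintC]
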